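/- Let u : V → W be a linear map. If S ⊆ V is PL, then the image u(S) ⊆ W is PL. -/

import Mathlib

open Set


/-- An (open or closed) affine half-space in a real vector space. -/
def IsHalfspace {V : Type*} [AddCommGroup V] [Module ℝ V] (H : Set V) : Prop :=
  ∃ (f : V →ₗ[ℝ] ℝ) (c : ℝ), H = {x | f x < c} ∨ H = {x | f x ≤ c}

/-- A convex polyhedron: the intersection of finitely many open or closed affine
half-spaces (the empty intersection being the whole space). -/
def IsConvexPolyhedron {V : Type*} [AddCommGroup V] [Module ℝ V] (P : Set V) : Prop :=
  ∃ (n : ℕ) (H : Fin n → Set V), (∀ i, IsHalfspace (H i)) ∧ P = ⋂ i, H i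

/-- A PL (piecewise linear) set: a finite union of convex polyhedra. -/
def IsPL {V : Type*} [AddCommGroup V] [Module ℝ V] (S : Set V) : Prop :=
  ∃ (n : ℕ) (P : Fin n → Set V), (∀ i, IsConvexPolyhedron (P i)) ∧ S = ⋃ i, P i

namespace PLaux


abbrev Constr (V : Type*) [AddCommGroup V] [Module ℝ V] := (V →ₗ[ℝ] ℝ) × ℝ × Bool

variable {V : Type*} [AddCommGroup V] [Module ℝ V]

def csat (p : Constr V) (x : V) : Prop :=
  if p.2.2 then p.1 x < p.2.1 else p.1 x ≤ p.2.1

def polySet (L : List (Constr V)) : Set V := {x | ∀ p ∈ L, csat p x}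

lemma polySet_append (L1 L2 : List (Constr V)) :
    polySet (L1 ++ L2) = polySet L1 ∩ polySet L2 := by
  ext x; simp [polySet, or_imp, forall_and]

lemma polySet_preimage {V' : Type*} [AddCommGroup V'] [Module ℝ V'] (m : V' →ₗ[ℝ] V)
    (L : List (Constr V)) :
    m ⁻¹' polySet L = polySet (L.map fun p => (p.1.comp m, p.2.1, p.2.2)) := by
  ext x
  simp only [polySet, mem_preimage, mem_setOf_eq, List.mem_map]
  constructor
  · rintro h q ⟨p, hp, rfl⟩
    exact h p hp
  · intro h p hp
    exact h _ ⟨p, hp, rfl⟩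

/-- lower bound set: t such that (strict ? b < t : b ≤ t) -/
def lowSet (l : ℝ × Bool) : Set ℝ := if l.2 then Ioi l.1 else Ici l.1
def upSet (u : ℝ × Bool) : Set ℝ := if u.2 then Iio u.1 else Iic u.1

lemma lowSet_chain (a b : ℝ × Bool) : lowSet a ⊆ lowSet b ∨ lowSet b ⊆ lowSet a := by
  rcases lt_trichotomy a.1 b.1 with h | h | h <;> cases ha : a.2 <;> cases hb : b.2 <;>
    simp only [lowSet, ha, hb, reduceIte, Bool.false_eq_true] <;>
    first
      | (left; intro t ht; simp only [mem_Ioi, mem_Ici] at ht ⊢; linarith)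
      | (right; intro t ht; simp only [mem_Ioi, mem_Ici] at ht ⊢; linarith)

lemma upSet_chain (a b : ℝ × Bool) : upSet a ⊆ upSet b ∨ upSet b ⊆ upSet a := by
  rcases lt_trichotomy a.1 b.1 with h | h | h <;> cases ha : a.2 <;> cases hb : b.2 <;>
    simp only [upSet, ha, hb, reduceIte, Bool.false_eq_true] <;>
    first
      | (left; intro t ht; simp only [mem_Iio, mem_Iic] at ht ⊢; linarith)
      | (right; intro t ht; simp only [mem_Iio, mem_Iic] at ht ⊢; linarith)

lemma exists_min_of_chain : ∀ (l : List (Set ℝ)), l ≠ [] →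
    (∀ s ∈ l, ∀ s' ∈ l, s ⊆ s' ∨ s' ⊆ s) → ∃ s ∈ l, ∀ s' ∈ l, s ⊆ s'
  | [], h, _ => absurd rfl h
  | a :: l, _, hc => by
    rcases eq_or_ne l [] with rfl | hl
    · exact ⟨a, by simp⟩
    · obtain ⟨m, hm, hmin⟩ := exists_min_of_chain l hl
        (fun s hs s' hs' => hc s (by simp [hs]) s' (by simp [hs']))
      rcases hc a (by simp) m (by simp [hm]) with h | h
      · refine ⟨a, by simp, ?_⟩
        rintro s' hs'
        rcases List.mem_cons.mp hs' with rfl | hs'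
        · exact subset_rfl
        · exact h.trans (hmin s' hs')
      · refine ⟨m, by simp [hm], ?_⟩
        rintro s' hs'
        rcases List.mem_cons.mp hs' with rfl | hs'
        · exact h
        · exact hmin s' hs'

lemma pair_nonempty (l u : ℝ × Bool)
    (h : if l.2 || u.2 then l.1 < u.1 else l.1 ≤ u.1) :
    ∃ t, t ∈ lowSet l ∧ t ∈ upSet u := by
  cases hl : l.2 <;> cases hu : u.2 <;> simp only [hl, hu, Bool.or_self, Bool.or_true,
    Bool.true_or, Bool.false_or, reduceIte, Bool.false_eq_true] at h <;>
    simp only [lowSet, upSet, hl, hu, reduceIte, Bool.false_eq_true, mem_Ioi, mem_Iio,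
      mem_Ici, mem_Iic]
  · exact ⟨l.1, le_refl _, h⟩
  · exact ⟨l.1, le_refl _, h⟩
  · exact ⟨u.1, h, le_refl _⟩
  · obtain ⟨t, h1, h2⟩ := exists_between h; exact ⟨t, h1, h2⟩

/-- Key 1-D feasibility lemma. -/
lemma key (los ups : List (ℝ × Bool))
    (h : ∀ l ∈ los, ∀ u ∈ ups, if l.2 || u.2 then l.1 < u.1 else l.1 ≤ u.1) :
    ∃ t, (∀ l ∈ los, t ∈ lowSet l) ∧ (∀ u ∈ ups, t ∈ upSet u) := by
  rcases eq_or_ne los [] with rfl | hlos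
  · rcases eq_or_ne ups [] with rfl | hups
    · exact ⟨0, by simp, by simp⟩
    · obtain ⟨s, hs, hmin⟩ := exists_min_of_chain (ups.map upSet)
        (by simpa using hups)
        (by
          simp only [List.mem_map]
          rintro _ ⟨a, _, rfl⟩ _ ⟨b, _, rfl⟩
          exact upSet_chain a b)
      obtain ⟨a, _, rfl⟩ := List.mem_map.mp hs
      have hne : (upSet a).Nonempty := by
        unfold upSet; cases a.2 <;> simp
      obtain ⟨t, ht⟩ := hne
      exact ⟨t, by simp, fun u hu => hmin (upSet u) (List.mem_map.mpr ⟨u, hu, rfl⟩) ht⟩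
  · obtain ⟨s, hs, hminL⟩ := exists_min_of_chain (los.map lowSet)
      (by simpa using hlos)
      (by
        simp only [List.mem_map]
        rintro _ ⟨a, _, rfl⟩ _ ⟨b, _, rfl⟩
        exact lowSet_chain a b)
    obtain ⟨a, ha, rfl⟩ := List.mem_map.mp hs
    rcases eq_or_ne ups [] with rfl | hups
    · have hne : (lowSet a).Nonempty := by
        unfold lowSet; cases a.2 <;> simp
      obtain ⟨t, ht⟩ := hne
      exact ⟨t, fun l hl => hminL (lowSet l) (List.mem_map.mpr ⟨l, hl, rfl⟩) ht, by simp⟩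
    · obtain ⟨s', hs', hminU⟩ := exists_min_of_chain (ups.map upSet)
        (by simpa using hups)
        (by
          simp only [List.mem_map]
          rintro _ ⟨a', _, rfl⟩ _ ⟨b, _, rfl⟩
          exact upSet_chain a' b)
      obtain ⟨b, hb, rfl⟩ := List.mem_map.mp hs'
      obtain ⟨t, ht1, ht2⟩ := pair_nonempty a b (h a ha b hb)
      exact ⟨t, fun l hl => hminL (lowSet l) (List.mem_map.mpr ⟨l, hl, rfl⟩) ht1,
        fun u hu => hminU (upSet u) (List.mem_map.mpr ⟨u, hu, rfl⟩) ht2⟩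


section FM
variable {U : Type*} [AddCommGroup U] [Module ℝ U]


noncomputable def aco (p : Constr (ℝ × U)) : ℝ := p.1 (1, 0)
noncomputable def gco (p : Constr (ℝ × U)) : U →ₗ[ℝ] ℝ := p.1.comp (LinearMap.inr ℝ ℝ U)

lemma fsplit (p : Constr (ℝ × U)) (t : ℝ) (x : U) :
    p.1 (t, x) = aco p * t + gco p x := by
  have : (t, x) = t • ((1:ℝ), (0:U)) + ((0:ℝ), x) := by
    simp [Prod.ext_iff]
  rw [this, map_add, map_smul, smul_eq_mul, aco, gco]
  ring_nf
  simp [LinearMap.inr]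

open Classical in
noncomputable def elim (L : List (Constr (ℝ × U))) : List (Constr U) :=
  (L.filterMap fun p => if aco p = 0 then some (gco p, p.2.1, p.2.2) else none)
  ++ L.flatMap (fun p => L.filterMap fun q =>
      if 0 < aco p ∧ aco q < 0 then
        some (aco p • gco q - aco q • gco p, aco p * q.2.1 - aco q * p.2.1, p.2.2 || q.2.2)
      else none)


lemma mem_elim_zero {L : List (Constr (ℝ × U))} {p : Constr (ℝ × U)} (hp : p ∈ L)
    (h0 : aco p = 0) : (gco p, p.2.1, p.2.2) ∈ elim L := by
  classical
  unfold elim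
  refine List.mem_append_left _ ?_
  exact List.mem_filterMap.mpr ⟨p, hp, by rw [if_pos h0]⟩

lemma mem_elim_pair {L : List (Constr (ℝ × U))} {p q : Constr (ℝ × U)} (hp : p ∈ L)
    (hq : q ∈ L) (hap : 0 < aco p) (haq : aco q < 0) :
    (aco p • gco q - aco q • gco p, aco p * q.2.1 - aco q * p.2.1, p.2.2 || q.2.2) ∈ elim L := by
  classical
  unfold elim
  refine List.mem_append_right _ ?_
  refine List.mem_flatMap.mpr ⟨p, hp, ?_⟩
  exact List.mem_filterMap.mpr ⟨q, hq, by rw [if_pos ⟨hap, haq⟩]⟩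

theorem elim_correct (L : List (Constr (ℝ × U))) :
    polySet (elim L) = Prod.snd '' polySet L := by
  classical
  ext x
  constructor
  · intro hx
    -- hard direction: build t via key lemma
    set los : List (ℝ × Bool) := L.filterMap
      (fun p => if aco p < 0 then some ((p.2.1 - gco p x) / aco p, p.2.2) else none) with hlos
    set ups : List (ℝ × Bool) := L.filterMap
      (fun p => if 0 < aco p then some ((p.2.1 - gco p x) / aco p, p.2.2) else none) with hups
    have hkey : ∀ l ∈ los, ∀ u ∈ ups, if l.2 || u.2 then l.1 < u.1 else l.1 ≤ u.1 := by
      intro l hl u hu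
      obtain ⟨q, hqL, hq⟩ := List.mem_filterMap.mp hl
      rw [Option.ite_none_right_eq_some, Option.some.injEq] at hq
      obtain ⟨haq, rfl⟩ := hq
      obtain ⟨p, hpL, hp⟩ := List.mem_filterMap.mp hu
      rw [Option.ite_none_right_eq_some, Option.some.injEq] at hp
      obtain ⟨hap, rfl⟩ := hp
      have hc := hx _ (mem_elim_pair hpL hqL hap haq)
      simp only [csat] at hc ⊢
      rw [Bool.or_comm]
      set a := aco p; set b := aco q
      set G := gco p x; set G' := gco q x
      set c := p.2.1; set c' := q.2.1
      have hGG' : (a • gco q - b • gco p) x = a * G' - b * G := by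
        simp [LinearMap.sub_apply, LinearMap.smul_apply, smul_eq_mul]; rfl
      rw [hGG'] at hc
      by_cases hs : (p.2.2 || q.2.2) = true
      · rw [if_pos hs] at hc ⊢
        rw [lt_div_iff₀ hap, div_mul_eq_mul_div, div_lt_iff_of_neg haq]
        nlinarith [hc]
      · rw [if_neg hs] at hc ⊢
        rw [le_div_iff₀ hap, div_mul_eq_mul_div, div_le_iff_of_neg haq]
        nlinarith [hc]
    obtain ⟨t, htl, htu⟩ := key los ups hkey
    refine ⟨(t, x), ?_, rfl⟩
    intro p hp
    rcases lt_trichotomy (aco p) 0 with hneg | hzero | hpos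
    · have hmem : ((p.2.1 - gco p x) / aco p, p.2.2) ∈ los :=
        List.mem_filterMap.mpr ⟨p, hp, by rw [if_pos hneg]⟩
      have := htl _ hmem
      simp only [lowSet] at this
      simp only [csat, fsplit]
      cases hs : p.2.2 with
      | true =>
        rw [hs] at this; simp only [if_pos, mem_Ioi, reduceIte] at this ⊢
        rw [div_lt_iff_of_neg hneg] at this
        linarith
      | false =>
        rw [hs] at this
        simp only [Bool.false_eq_true, reduceIte, mem_Ici] at this ⊢
        rw [div_le_iff_of_neg hneg] at this
        linarith
    · have := hx _ (mem_elim_zero hp hzero)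
      simp only [csat, fsplit, hzero, zero_mul, zero_add] at this ⊢
      exact this
    · have hmem : ((p.2.1 - gco p x) / aco p, p.2.2) ∈ ups :=
        List.mem_filterMap.mpr ⟨p, hp, by rw [if_pos hpos]⟩
      have := htu _ hmem
      simp only [upSet] at this
      simp only [csat, fsplit]
      cases hs : p.2.2 with
      | true =>
        rw [hs] at this; simp only [mem_Iio, reduceIte] at this ⊢
        rw [lt_div_iff₀ hpos] at this
        linarith
      | false =>
        rw [hs] at this
        simp only [Bool.false_eq_true, reduceIte, mem_Iic] at this ⊢
        rw [le_div_iff₀ hpos] at this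
        linarith
  · -- easy direction
    rintro ⟨⟨t, x'⟩, h, rfl⟩
    intro r hr
    unfold elim at hr
    rcases List.mem_append.mp hr with hr | hr
    · obtain ⟨p, hp, hpr⟩ := List.mem_filterMap.mp hr
      rw [Option.ite_none_right_eq_some, Option.some.injEq] at hpr
      obtain ⟨h0, rfl⟩ := hpr
      have := h p hp
      simp only [csat, fsplit, h0, zero_mul, zero_add] at this ⊢
      exact this
    · obtain ⟨p, hp, hr2⟩ := List.mem_flatMap.mp hr
      obtain ⟨q, hq, hpr⟩ := List.mem_filterMap.mp hr2
      rw [Option.ite_none_right_eq_some, Option.some.injEq] at hpr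
      obtain ⟨⟨hap, haq⟩, rfl⟩ := hpr
      have h1 := h p hp
      have h2 := h q hq
      simp only [csat, fsplit] at h1 h2 ⊢
      have hGG' : (aco p • gco q - aco q • gco p) x' = aco p * gco q x' - aco q * gco p x' := by
        simp [LinearMap.sub_apply, LinearMap.smul_apply, smul_eq_mul]
      rw [hGG']
      cases hsp : p.2.2 <;> cases hsq : q.2.2 <;>
        rw [hsp] at h1 <;> rw [hsq] at h2 <;>
        simp only [Bool.false_eq_true, Bool.or_self, Bool.or_true, Bool.true_or,
          Bool.false_or, reduceIte] at h1 h2 ⊢ <;>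
        nlinarith [h1, h2, hap, haq]


end FM

section Glue
open Module

lemma polyhedron_iff {V : Type*} [AddCommGroup V] [Module ℝ V] (P : Set V) :
    IsConvexPolyhedron P ↔ ∃ L : List (Constr V), P = polySet L := by
  constructor
  · rintro ⟨n, H, hH, rfl⟩
    have hch : ∀ i, ∃ p : Constr V, H i = {x | csat p x} := by
      intro i
      obtain ⟨f, c, hc | hc⟩ := hH i
      · exact ⟨(f, c, true), by simp [csat, hc]⟩
      · exact ⟨(f, c, false), by simp [csat, hc]⟩
    choose p hp using hch
    refine ⟨(List.finRange n).map p, ?_⟩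
    ext x
    simp only [mem_iInter, polySet, mem_setOf_eq, List.mem_map, List.mem_finRange]
    constructor
    · rintro h q ⟨i, -, rfl⟩
      have := h i; rw [hp i] at this; exact this
    · intro h i
      rw [hp i]; exact h _ ⟨i, trivial, rfl⟩
  · rintro ⟨L, rfl⟩
    refine ⟨L.length, fun i => {x | csat (L.get i) x}, ?_, ?_⟩
    · intro i
      refine ⟨(L.get i).1, (L.get i).2.1, ?_⟩
      cases hs : (L.get i).2.2
      · right; ext x; simp only [List.get_eq_getElem] at hs ⊢; simp [csat, hs]
      · left; ext x; simp only [List.get_eq_getElem] at hs ⊢; simp [csat, hs]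
    · ext x
      simp only [polySet, mem_setOf_eq, mem_iInter]
      constructor
      · intro h i
        exact h _ (List.get_mem L i)
      · intro h p hp
        obtain ⟨i, hi, rfl⟩ := List.mem_iff_getElem.mp hp
        exact h ⟨i, hi⟩

lemma submodule_eq_polySet {W : Type*} [AddCommGroup W] [Module ℝ W] [FiniteDimensional ℝ W]
    (M : Submodule ℝ W) : ∃ L : List (Constr W), (M : Set W) = polySet L := by
  obtain ⟨N, hN⟩ := Submodule.exists_isCompl M
  set π := N.linearProjOfIsCompl M hN.symm with hπ
  have hker : ∀ x : W, x ∈ M ↔ π x = 0 := by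
    intro x
    exact (Submodule.projectionOnto_apply_eq_zero_iff hN.symm).symm
  set b := Module.finBasis ℝ N with hb
  set f : Fin (finrank ℝ N) → (W →ₗ[ℝ] ℝ) := fun i => (b.coord i).comp π with hf
  refine ⟨(List.finRange (finrank ℝ N)).flatMap fun i => [(f i, 0, false), (-(f i), 0, false)], ?_⟩
  ext x
  simp only [SetLike.mem_coe, polySet, mem_setOf_eq, List.mem_flatMap, List.mem_finRange,
    List.mem_cons, List.mem_singleton, List.not_mem_nil, or_false]
  rw [hker]
  constructor
  · intro h0 p hp
    obtain ⟨i, -, hi⟩ := hp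
    rcases hi with rfl | rfl <;> simp [csat, hf, h0]
  · intro h
    have hall : ∀ i, f i x = 0 := by
      intro i
      have h1 := h _ ⟨i, trivial, Or.inl rfl⟩
      have h2 := h _ ⟨i, trivial, Or.inr rfl⟩
      simp only [csat, reduceIte, Bool.false_eq_true, LinearMap.neg_apply] at h1 h2
      linarith
    apply b.ext_elem
    intro i
    have := hall i
    simp only [hf, LinearMap.comp_apply, Basis.coord_apply] at this
    simp [this]

lemma image_eq_of_leftInverse {V W : Type*} [AddCommGroup V] [Module ℝ V]
    [AddCommGroup W] [Module ℝ W] (u : V →ₗ[ℝ] W) (pinv : W →ₗ[ℝ] V)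
    (h : pinv ∘ₗ u = LinearMap.id) (X : Set V) :
    u '' X = pinv ⁻¹' X ∩ Set.range u := by
  have hpu : ∀ z : V, pinv (u z) = z := fun z => by
    rw [← LinearMap.comp_apply, h, LinearMap.id_apply]
  ext y
  constructor
  · rintro ⟨z, hz, rfl⟩
    exact ⟨by rwa [mem_preimage, hpu], z, rfl⟩
  · rintro ⟨hy, z, rfl⟩
    rw [mem_preimage, hpu] at hy
    exact ⟨z, hy, rfl⟩

universe v w

lemma poly_image_aux {W : Type w} [AddCommGroup W] [Module ℝ W] [FiniteDimensional ℝ W] :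
    ∀ (n : ℕ) (V : Type v) [AddCommGroup V] [Module ℝ V] [FiniteDimensional ℝ V],
      finrank ℝ V ≤ n → ∀ (u : V →ₗ[ℝ] W) (L : List (Constr V)),
      ∃ L', u '' polySet L = polySet L' := by
  have inj_case : ∀ (V : Type v) [AddCommGroup V] [Module ℝ V],
      ∀ (u : V →ₗ[ℝ] W), LinearMap.ker u = ⊥ → ∀ L : List (Constr V),
      ∃ L', u '' polySet L = polySet L' := by
    intro V _ _ u hker L
    obtain ⟨pinv, hpinv⟩ := u.exists_leftInverse_of_injective hker
    obtain ⟨L2, hL2⟩ := submodule_eq_polySet (LinearMap.range u)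
    refine ⟨(L.map fun p => (p.1.comp pinv, p.2.1, p.2.2)) ++ L2, ?_⟩
    rw [image_eq_of_leftInverse u pinv hpinv, polySet_append, ← polySet_preimage, ← hL2]
    rfl
  intro n
  induction n with
  | zero =>
    intro V _ _ _ hrank u L
    have hsub : Subsingleton V := by
      rw [← Module.finrank_zero_iff (R := ℝ)]
      omega
    refine inj_case V u ?_ L
    ext z
    simp [Subsingleton.elim z 0]
  | succ n IH =>
    intro V _ _ _ hrank u L
    by_cases hker : LinearMap.ker u = ⊥
    · exact inj_case V u hker L
    · obtain ⟨v, hvker, hv0⟩ := (Submodule.ne_bot_iff _).mp hker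
      set Mv := Submodule.span ℝ {v} with hMv
      obtain ⟨M, hM⟩ := Submodule.exists_isCompl Mv
      set e1 : ℝ ≃ₗ[ℝ] Mv := LinearEquiv.toSpanNonzeroSingleton ℝ V v hv0 with he1
      set E : (ℝ × M) ≃ₗ[ℝ] V :=
        (LinearEquiv.prodCongr e1 (LinearEquiv.refl ℝ M)).trans (Mv.prodEquivOfIsCompl M hM) with hE
      have hEapp : ∀ (t : ℝ) (m : M), E (t, m) = t • v + (m : V) := by
        intro t m
        simp [hE, he1, Submodule.coe_prodEquivOfIsCompl',
          LinearEquiv.toSpanNonzeroSingleton_apply]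
        exact congrArg Subtype.val (LinearEquiv.toSpanNonzeroSingleton_apply ℝ V v hv0 t)
      have hcomp : ∀ (t : ℝ) (m : M), u (E (t, m)) = (u ∘ₗ M.subtype) m := by
        intro t m
        rw [hEapp, map_add, map_smul, hvker, smul_zero, zero_add]
        rfl
      set L1 := L.map fun p => (p.1.comp E.toLinearMap, p.2.1, p.2.2) with hL1
      have hpre : (⇑E ⁻¹' polySet L : Set (ℝ × M)) = polySet L1 :=
        polySet_preimage E.toLinearMap L
      have hrankM : finrank ℝ M ≤ n := by
        have h1 := Submodule.finrank_add_eq_of_isCompl hM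
        have h2 : finrank ℝ Mv = 1 := finrank_span_singleton hv0
        omega
      obtain ⟨L', hL'⟩ := IH M hrankM (u ∘ₗ M.subtype) (elim L1)
      refine ⟨L', ?_⟩
      rw [← hL', elim_correct]
      ext y
      constructor
      · rintro ⟨z, hz, rfl⟩
        obtain ⟨⟨t, m⟩, rfl⟩ := E.surjective z
        have hm : (t, m) ∈ polySet L1 := by
          rw [← hpre]; exact hz
        exact ⟨m, ⟨(t, m), hm, rfl⟩, (hcomp t m).symm⟩
      · rintro ⟨m, ⟨⟨t, m'⟩, hm, rfl⟩, rfl⟩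
        refine ⟨E (t, m'), ?_, hcomp t m'⟩
        rw [← hpre] at hm
        exact hm

end Glue
end PLaux

theorem PL_image {V W : Type*} [NormedAddCommGroup V] [NormedSpace ℝ V]
    [FiniteDimensional ℝ V] [NormedAddCommGroup W] [NormedSpace ℝ W]
    [FiniteDimensional ℝ W] (u : V →ₗ[ℝ] W) (S : Set V) (hS : IsPL S) :
    IsPL (u '' S) := by
  obtain ⟨n, P, hP, rfl⟩ := hS
  have h1 : ∀ i, ∃ L, P i = PLaux.polySet L := fun i => (PLaux.polyhedron_iff _).mp (hP i)
  choose Lf hLf using h1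
  have h2 : ∀ i, ∃ L', u '' P i = PLaux.polySet L' := by
    intro i
    rw [hLf i]
    exact PLaux.poly_image_aux (Module.finrank ℝ V) V le_rfl u (Lf i)
  choose L' hL' using h2
  refine ⟨n, fun i => PLaux.polySet (L' i),
    fun i => (PLaux.polyhedron_iff _).mpr ⟨L' i, rfl⟩, ?_⟩
  rw [image_iUnion]
  exact iUnion_congr hL'
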